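/- (Telescoping / simulation lemma) Let M_1 = (S, A, P_1, r, γ) and M_2 = (S, A, P_2, r, γ) be two finite MDPs sharing state space, action space, reward, and discount but differing in transition dynamics. Then for any policy π, J_{M_1}(π) - J_{M_2}(π) = (γ/(1-γ)) · E_{(s,a) ∼ ρ^π_{M_1}}[ E_{s' ∼ P_1(·|s,a)}[V^π_{M_2}(s')] - E_{s' ∼ P_2(·|s,a)}[V^π_{M_2}(s')] ], where ρ^π_{M_1}(s,a) = (1-γ)Σ_{t≥0} γ^t P^π_{M_1,t}(s)π(a|s) is the normalized discounted state-action occupancy in M_1. -/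
import Mathlib


open Finset

/-- State distribution at time `t` induced by policy `pol` in the MDP with kernel `P`,
starting from initial distribution `init`. -/
noncomputable def visit {S A : Type*} [Fintype S] [Fintype A]
    (P : S → A → S → ℝ) (pol : S → A → ℝ) (init : S → ℝ) : ℕ → S → ℝ
  | 0 => init
  | (t + 1) => fun s' => ∑ s, ∑ a, visit P pol init t s * pol s a * P s a s'

/-- Discounted return of policy `pol` from initial distribution `init`. -/
noncomputable def ret {S A : Type*} [Fintype S] [Fintype A]
    (P : S → A → S → ℝ) (pol : S → A → ℝ) (init : S → ℝ) (r : S → A → ℝ) (γ : ℝ) : ℝ :=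
  ∑' t : ℕ, γ ^ t * ∑ s, visit P pol init t s * ∑ a, pol s a * r s a

section aux

variable {S A : Type*} [Fintype S] [Fintype A]
variable {P : S → A → S → ℝ} {pol : S → A → ℝ} {init : S → ℝ}

lemma visit_nonneg (hP : ∀ s a s', 0 ≤ P s a s') (hpol : ∀ s a, 0 ≤ pol s a)
    (hinit : ∀ s, 0 ≤ init s) : ∀ t s, 0 ≤ visit P pol init t s
  | 0, s => hinit s
  | (t + 1), s' => Finset.sum_nonneg fun s _ => Finset.sum_nonneg fun a _ =>
      mul_nonneg (mul_nonneg (visit_nonneg hP hpol hinit t s) (hpol s a)) (hP s a s')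

lemma visit_sum_one (hP : ∀ s a, ∑ s', P s a s' = 1) (hpol : ∀ s, ∑ a, pol s a = 1)
    (hinit : ∑ s, init s = 1) : ∀ t, ∑ s, visit P pol init t s = 1
  | 0 => hinit
  | (t + 1) => by
    show ∑ s', ∑ s, ∑ a, visit P pol init t s * pol s a * P s a s' = 1
    rw [Finset.sum_comm]
    have : ∀ s, ∑ s', ∑ a, visit P pol init t s * pol s a * P s a s'
        = visit P pol init t s := by
      intro s
      rw [Finset.sum_comm]
      simp only [mul_assoc, ← Finset.mul_sum, hP, hpol, mul_one]
    simp_rw [this]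
    exact visit_sum_one hP hpol hinit t

lemma visit_le_one (hPn : ∀ s a s', 0 ≤ P s a s') (hP : ∀ s a, ∑ s', P s a s' = 1)
    (hpoln : ∀ s a, 0 ≤ pol s a) (hpol : ∀ s, ∑ a, pol s a = 1)
    (hinitn : ∀ s, 0 ≤ init s) (hinit : ∑ s, init s = 1) (t : ℕ) (s : S) :
    visit P pol init t s ≤ 1 := by
  calc visit P pol init t s ≤ ∑ s, visit P pol init t s :=
        Finset.single_le_sum (fun s _ => visit_nonneg hPn hpoln hinitn t s) (mem_univ s)
    _ = 1 := visit_sum_one hP hpol hinit t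

lemma summable_geom_bound {γ : ℝ} (h0 : 0 ≤ γ) (h1 : γ < 1) (C : ℝ) (f : ℕ → ℝ)
    (hf : ∀ t, |f t| ≤ γ ^ t * C) : Summable f :=
  Summable.of_abs (Summable.of_nonneg_of_le (fun _ => abs_nonneg _) hf
    ((summable_geometric_of_lt_one h0 h1).mul_right C))

lemma tsum_telescope_real (u : ℕ → ℝ) (hu : Filter.Tendsto u Filter.atTop (nhds 0))
    (hs : Summable fun t => u t - u (t + 1)) : ∑' t, (u t - u (t + 1)) = u 0 := by
  have h1 := hs.hasSum.tendsto_sum_nat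
  have h2 : Filter.Tendsto (fun n => ∑ i ∈ Finset.range n, (u i - u (i + 1)))
      Filter.atTop (nhds (u 0)) := by
    simp_rw [Finset.sum_range_sub' u]
    simpa using tendsto_const_nhds.sub hu
  exact tendsto_nhds_unique h1 h2

end aux

/-- the telescoping (simulation) lemma. -/
theorem telescoping_lemma
    {S A : Type*} [Fintype S] [Fintype A] [Nonempty S] [Nonempty A]
    (P1 P2 : S → A → S → ℝ) (pol : S → A → ℝ) (init : S → ℝ) (r : S → A → ℝ)
    (γ : ℝ) (hγ0 : 0 ≤ γ) (hγ1 : γ < 1)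
    (hP1_nonneg : ∀ s a s', 0 ≤ P1 s a s') (hP1_sum : ∀ s a, ∑ s', P1 s a s' = 1)
    (hP2_nonneg : ∀ s a s', 0 ≤ P2 s a s') (hP2_sum : ∀ s a, ∑ s', P2 s a s' = 1)
    (hpol_nonneg : ∀ s a, 0 ≤ pol s a) (hpol_sum : ∀ s, ∑ a, pol s a = 1)
    (hinit_nonneg : ∀ s, 0 ≤ init s) (hinit_sum : ∑ s, init s = 1)
    (rmax : ℝ) (hr : ∀ s a, |r s a| ≤ rmax)
    (V : S → ℝ)
    (hV : ∀ s, V s = ∑ a, pol s a * (r s a + γ * ∑ s', P2 s a s' * V s'))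
    (ρ : S → A → ℝ)
    (hρ : ∀ s a, ρ s a = (1 - γ) * ∑' t : ℕ, γ ^ t * visit P1 pol init t s * pol s a) :
    ret P1 pol init r γ - ret P2 pol init r γ
      = γ / (1 - γ) *
        ∑ s, ∑ a, ρ s a * ((∑ s', P1 s a s' * V s') - ∑ s', P2 s a s' * V s') := by
  classical
  -- abbreviations
  set Δ : S → A → ℝ := fun s a => (∑ s', P1 s a s' * V s') - ∑ s', P2 s a s' * V s' with hΔ
  -- generic lemma: for a kernel Q,
  -- ret Q = ∑ init V + γ * ∑' t, γ^t * ∑ s a, visit Q t s * pol s a * (EV_Q s a - EV_{P2} s a)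
  have key : ∀ (Q : S → A → S → ℝ), (∀ s a s', 0 ≤ Q s a s') → (∀ s a, ∑ s', Q s a s' = 1) →
      ret Q pol init r γ = (∑ s, init s * V s) + γ * ∑' t : ℕ, γ ^ t *
        ∑ s, ∑ a, visit Q pol init t s * pol s a *
          ((∑ s', Q s a s' * V s') - ∑ s', P2 s a s' * V s') := by
    intro Q hQn hQs
    set v := visit Q pol init with hv
    have hvn := visit_nonneg hQn hpol_nonneg hinit_nonneg (P := Q)
    have hv1 := visit_le_one hQn hQs hpol_nonneg hpol_sum hinit_nonneg hinit_sum (P := Q)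
    set u : ℕ → ℝ := fun t => γ ^ t * ∑ s, v t s * V s with hu
    set d : ℕ → ℝ := fun t => γ ^ t *
        ∑ s, ∑ a, v t s * pol s a * ((∑ s', Q s a s' * V s') - ∑ s', P2 s a s' * V s') with hd
    set g : ℕ → ℝ := fun t => γ ^ t * ∑ s, v t s * ∑ a, pol s a * r s a with hg
    -- step identity
    have step : ∀ t, g t = u t - u (t + 1) + γ * d t := by
      intro t
      have h1 : ∑ s, v t s * V s
          = (∑ s, v t s * ∑ a, pol s a * r s a)
            + γ * ∑ s, ∑ a, v t s * pol s a * ∑ s', P2 s a s' * V s' := by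
        calc ∑ s, v t s * V s
            = ∑ s, v t s * ∑ a, pol s a * (r s a + γ * ∑ s', P2 s a s' * V s') :=
              Finset.sum_congr rfl fun s _ => by rw [hV s]
          _ = ∑ s, ((v t s * ∑ a, pol s a * r s a)
                + γ * ∑ a, v t s * pol s a * ∑ s', P2 s a s' * V s') :=
              Finset.sum_congr rfl fun s _ => by
                rw [Finset.mul_sum, Finset.mul_sum, Finset.mul_sum, ← Finset.sum_add_distrib]
                exact Finset.sum_congr rfl fun a _ => by ring
          _ = _ := by rw [Finset.sum_add_distrib, ← Finset.mul_sum]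
      have h2 : ∑ s', v (t + 1) s' * V s'
          = ∑ s, ∑ a, v t s * pol s a * ∑ s', Q s a s' * V s' := by
        have : ∀ s', v (t + 1) s' = ∑ s, ∑ a, v t s * pol s a * Q s a s' := fun s' => rfl
        simp_rw [this, Finset.sum_mul]
        rw [Finset.sum_comm]
        refine Finset.sum_congr rfl fun s _ => ?_
        rw [Finset.sum_comm]
        refine Finset.sum_congr rfl fun a _ => ?_
        rw [Finset.mul_sum]
        exact Finset.sum_congr rfl fun x _ => by ring
      have h3 : ∑ s, ∑ a, v t s * pol s a *
            ((∑ s', Q s a s' * V s') - ∑ s', P2 s a s' * V s')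
          = (∑ s, ∑ a, v t s * pol s a * ∑ s', Q s a s' * V s')
            - ∑ s, ∑ a, v t s * pol s a * ∑ s', P2 s a s' * V s' := by
        simp_rw [mul_sub, Finset.sum_sub_distrib]
      simp only [hu, hg, hd, h1, h2, h3]
      ring
    -- bounds & summability
    have hRb : ∀ t, |∑ s, v t s * ∑ a, pol s a * r s a| ≤ ∑ s, |∑ a, pol s a * r s a| := by
      intro t
      calc |∑ s, v t s * ∑ a, pol s a * r s a| ≤ ∑ s, |v t s * ∑ a, pol s a * r s a| :=
            Finset.abs_sum_le_sum_abs _ _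
        _ ≤ ∑ s, |∑ a, pol s a * r s a| := Finset.sum_le_sum fun s _ => by
            rw [abs_mul, abs_of_nonneg (hvn t s)]
            exact mul_le_of_le_one_left (abs_nonneg _) (hv1 t s)
    have hub : ∀ t, |u t| ≤ γ ^ t * ∑ s, |V s| := by
      intro t
      rw [hu, abs_mul, abs_pow, abs_of_nonneg hγ0]
      refine mul_le_mul_of_nonneg_left ?_ (pow_nonneg hγ0 t)
      calc |∑ s, v t s * V s| ≤ ∑ s, |v t s * V s| := Finset.abs_sum_le_sum_abs _ _
        _ ≤ ∑ s, |V s| := Finset.sum_le_sum fun s _ => by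
            rw [abs_mul, abs_of_nonneg (hvn t s)]
            exact mul_le_of_le_one_left (abs_nonneg _) (hv1 t s)
    have hdb : ∀ t, |d t| ≤ γ ^ t * ∑ s, ∑ a,
        |(∑ s', Q s a s' * V s') - ∑ s', P2 s a s' * V s'| := by
      intro t
      rw [hd, abs_mul, abs_pow, abs_of_nonneg hγ0]
      refine mul_le_mul_of_nonneg_left ?_ (pow_nonneg hγ0 t)
      calc |∑ s, ∑ a, v t s * pol s a * (_ - _)|
          ≤ ∑ s, |∑ a, v t s * pol s a * (_ - _)| := Finset.abs_sum_le_sum_abs _ _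
        _ ≤ ∑ s, ∑ a, |v t s * pol s a * (_ - _)| :=
            Finset.sum_le_sum fun s _ => Finset.abs_sum_le_sum_abs _ _
        _ ≤ _ := Finset.sum_le_sum fun s _ => Finset.sum_le_sum fun a _ => by
            rw [abs_mul, abs_mul, abs_of_nonneg (hvn t s), abs_of_nonneg (hpol_nonneg s a)]
            have h1 : pol s a ≤ 1 := by
              calc pol s a ≤ ∑ a, pol s a :=
                    Finset.single_le_sum (fun a _ => hpol_nonneg s a) (mem_univ a)
                _ = 1 := hpol_sum s
            have hle : v t s * pol s a ≤ 1 := by nlinarith [hv1 t s, hvn t s, hpol_nonneg s a]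
            exact mul_le_of_le_one_left (abs_nonneg _) hle
    have hgsum : Summable g := summable_geom_bound hγ0 hγ1 _ g fun t => by
      rw [hg, abs_mul, abs_pow, abs_of_nonneg hγ0]
      exact mul_le_mul_of_nonneg_left (hRb t) (pow_nonneg hγ0 t)
    have husum : Summable fun t => u t - u (t + 1) :=
      summable_geom_bound hγ0 hγ1 ((∑ s, |V s|) * (1 + γ)) _ fun t => by
        calc |u t - u (t + 1)| ≤ |u t| + |u (t + 1)| := abs_sub _ _
          _ ≤ γ ^ t * ∑ s, |V s| + γ ^ (t + 1) * ∑ s, |V s| := add_le_add (hub t) (hub (t + 1))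
          _ = γ ^ t * ((∑ s, |V s|) * (1 + γ)) := by ring
    have hdsum : Summable d := summable_geom_bound hγ0 hγ1 _ d hdb
    -- tendsto of u to 0
    have hut : Filter.Tendsto u Filter.atTop (nhds 0) := by
      have hgeo : Filter.Tendsto (fun t : ℕ => γ ^ t * ∑ s, |V s|) Filter.atTop (nhds 0) := by
        simpa using (tendsto_pow_atTop_nhds_zero_of_lt_one hγ0 hγ1).mul_const (∑ s, |V s|)
      refine squeeze_zero_norm (fun t => ?_) hgeo
      simpa [Real.norm_eq_abs] using hub t
    have hret : ret Q pol init r γ = ∑' t, g t := rfl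
    rw [hret]
    calc ∑' t, g t = ∑' t, ((u t - u (t + 1)) + γ * d t) := by
          exact tsum_congr step
      _ = (∑' t, (u t - u (t + 1))) + ∑' t, γ * d t :=
          Summable.tsum_add husum (hdsum.mul_left γ)
      _ = u 0 + γ * ∑' t, d t := by
          rw [tsum_telescope_real u hut husum, tsum_mul_left]
      _ = (∑ s, init s * V s) + γ * ∑' t, d t := by
          simp [hu, hv, visit]
  -- apply to P2: the correction term vanishes
  have hP2eq : ret P2 pol init r γ = ∑ s, init s * V s := by
    rw [key P2 hP2_nonneg hP2_sum]
    simp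
  -- apply to P1
  have hP1eq : ret P1 pol init r γ = (∑ s, init s * V s) + γ * ∑' t : ℕ, γ ^ t *
      ∑ s, ∑ a, visit P1 pol init t s * pol s a * Δ s a :=
    key P1 hP1_nonneg hP1_sum
  -- RHS manipulation
  have hv1 := visit_le_one hP1_nonneg hP1_sum hpol_nonneg hpol_sum hinit_nonneg hinit_sum
  have hvn := visit_nonneg hP1_nonneg hpol_nonneg hinit_nonneg (P := P1)
  have hpol1 : ∀ s a, pol s a ≤ 1 := fun s a => by
    calc pol s a ≤ ∑ a, pol s a :=
          Finset.single_le_sum (fun a _ => hpol_nonneg s a) (mem_univ a)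
      _ = 1 := hpol_sum s
  have hsumm : ∀ s a, Summable fun t : ℕ => γ ^ t * visit P1 pol init t s * pol s a * Δ s a := by
    intro s a
    refine summable_geom_bound hγ0 hγ1 |Δ s a| _ fun t => ?_
    rw [abs_mul, abs_mul, abs_mul, abs_pow, abs_of_nonneg hγ0,
      abs_of_nonneg (hvn t s), abs_of_nonneg (hpol_nonneg s a)]
    have hle : visit P1 pol init t s * pol s a ≤ 1 := by
      nlinarith [hv1 t s, hvn t s, hpol_nonneg s a, hpol1 s a]
    calc γ ^ t * visit P1 pol init t s * pol s a * |Δ s a|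
        = γ ^ t * (visit P1 pol init t s * pol s a * |Δ s a|) := by ring
      _ ≤ γ ^ t * (1 * |Δ s a|) := mul_le_mul_of_nonneg_left
          (mul_le_mul_of_nonneg_right hle (abs_nonneg _)) (pow_nonneg hγ0 t)
      _ = γ ^ t * |Δ s a| := by ring
  have hρΔ : ∑ s, ∑ a, ρ s a * Δ s a
      = (1 - γ) * ∑' t : ℕ, γ ^ t * ∑ s, ∑ a, visit P1 pol init t s * pol s a * Δ s a := by
    have h1 : ∀ s a, ρ s a * Δ s a
        = (1 - γ) * ∑' t : ℕ, γ ^ t * visit P1 pol init t s * pol s a * Δ s a := by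
      intro s a
      rw [hρ s a, mul_assoc, ← tsum_mul_right]
    simp_rw [h1, ← Finset.mul_sum]
    congr 1
    calc ∑ s, ∑ a, ∑' t : ℕ, γ ^ t * visit P1 pol init t s * pol s a * Δ s a
        = ∑ s, ∑' t : ℕ, ∑ a, γ ^ t * visit P1 pol init t s * pol s a * Δ s a :=
          Finset.sum_congr rfl fun s _ => (Summable.tsum_finsetSum fun a _ => hsumm s a).symm
      _ = ∑' t : ℕ, ∑ s, ∑ a, γ ^ t * visit P1 pol init t s * pol s a * Δ s a :=
          (Summable.tsum_finsetSum fun s _ => summable_sum fun a _ => hsumm s a).symm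
      _ = ∑' t : ℕ, γ ^ t * ∑ s, ∑ a, visit P1 pol init t s * pol s a * Δ s a := by
          refine tsum_congr fun t => ?_
          rw [Finset.mul_sum]
          exact Finset.sum_congr rfl fun s _ => by
            rw [Finset.mul_sum]
            exact Finset.sum_congr rfl fun a _ => by ring
  -- final assembly
  have hne : (1 : ℝ) - γ ≠ 0 := by linarith
  have hgoal : ∑ s, ∑ a, ρ s a * ((∑ s', P1 s a s' * V s') - ∑ s', P2 s a s' * V s')
      = ∑ s, ∑ a, ρ s a * Δ s a := rfl
  rw [hP1eq, hP2eq, hgoal, hρΔ]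
  field_simp
  ring
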